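/- arXiv:math/0104081 — 4 statements merged into one kernel-verified Lean document; each statement's English description precedes it below -/
import Mathlib

section
/- Let n ≥ 1 be a natural number and z ∈ ℂ. The φ-distance from 0 to z equals |z|^{n+1}/(n+1): the infimum over all C¹ paths γ : [0,1] → ℂ with γ(0) = 0 and γ(1) = z of ∫₀¹ |γ(t)|ⁿ ‖γ'(t)‖ dt equals |z|^{n+1}/(n+1), and it is attained by the radial segment γ(t) = t·z. In particular, the radii centered at the zero are φ-geodesic arcs. -/
lemma radial_deriv (z : ℂ) (t : ℝ) : deriv (fun s : ℝ => (s : ℂ) * z) t = z := by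
  have h : HasDerivAt (fun s : ℝ => (s : ℂ) * z) ((Complex.ofRealCLM 1) * z) t :=
    (Complex.ofRealCLM.hasDerivAt).mul_const z
  simpa using h.deriv

lemma radial_integral (n : ℕ) (z : ℂ) :
    (∫ t in (0:ℝ)..1,
        ‖(t : ℂ) * z‖ ^ n * ‖deriv (fun s : ℝ => (s : ℂ) * z) t‖) =
      ‖z‖ ^ (n + 1) / (n + 1) := by
  have h1 : (∫ t in (0:ℝ)..1,
        ‖(t : ℂ) * z‖ ^ n * ‖deriv (fun s : ℝ => (s : ℂ) * z) t‖)
      = ∫ t in (0:ℝ)..1, ‖z‖ ^ (n+1) * t ^ n := by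
    apply intervalIntegral.integral_congr
    intro t ht
    rw [Set.uIcc_of_le (by norm_num)] at ht
    show ‖(t : ℂ) * z‖ ^ n * ‖deriv (fun s : ℝ => (s : ℂ) * z) t‖ = ‖z‖ ^ (n+1) * t ^ n
    rw [radial_deriv, norm_mul, Complex.norm_real, Real.norm_of_nonneg ht.1]
    ring
  rw [h1, intervalIntegral.integral_const_mul, integral_pow]
  ring

lemma phi_lower_bound (n : ℕ) (z : ℂ) (γ : ℝ → ℂ) (hγ : ContDiff ℝ 1 γ)
    (h0 : γ 0 = 0) (h1 : γ 1 = z) :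
    ‖z‖ ^ (n + 1) / (n + 1) ≤
      ∫ t in (0:ℝ)..1, ‖γ t‖ ^ n * ‖deriv γ t‖ := by
  rcases eq_or_ne z 0 with rfl | hz
  · simp only [norm_zero, ne_eq, zero_pow, Nat.succ_ne_zero, not_false_iff, zero_div]
    apply intervalIntegral.integral_nonneg (by norm_num)
    intro t _
    positivity
  · set c : ℂ := (starRingEnd ℂ) z / (‖z‖ : ℂ) with hc
    have hcabs : ‖c‖ = 1 := by
      rw [hc, norm_div, Complex.norm_conj, Complex.norm_real,
        Real.norm_of_nonneg (norm_nonneg z), div_self (norm_ne_zero_iff.mpr hz)]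
    set r : ℝ → ℝ := fun t => (c * γ t).re with hr
    have hγd : Differentiable ℝ γ := hγ.differentiable one_ne_zero
    have hγ' : Continuous (deriv γ) := hγ.continuous_deriv le_rfl
    have hrd : ∀ t, HasDerivAt r ((c * deriv γ t).re) t := by
      intro t
      exact (Complex.reCLM.hasFDerivAt.comp_hasDerivAt t
        (((hγd t).hasDerivAt).const_mul c))
    have hrc : Continuous r := Complex.continuous_re.comp (continuous_const.mul hγ.continuous)
    have hr'c : Continuous fun t => (c * deriv γ t).re :=
      Complex.continuous_re.comp (continuous_const.mul hγ')
    -- FTC for r^(n+1)/(n+1)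
    have hFd : ∀ t, HasDerivAt (fun t => r t ^ (n + 1) / (n + 1))
        (r t ^ n * (c * deriv γ t).re) t := by
      intro t
      have := ((hrd t).pow (n + 1)).div_const ((n : ℝ) + 1)
      refine this.congr_deriv ?_
      have hne : (n : ℝ) + 1 ≠ 0 := by positivity
      rw [div_eq_iff hne, Nat.add_sub_cancel]; push_cast
      ring
    have hFTC : (∫ t in (0:ℝ)..1, r t ^ n * (c * deriv γ t).re)
        = r 1 ^ (n + 1) / (n + 1) - r 0 ^ (n + 1) / (n + 1) := by
      exact intervalIntegral.integral_eq_sub_of_hasDerivAt (fun t _ => hFd t)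
        (((hrc.pow n).mul hr'c).intervalIntegrable 0 1)
    have hr0 : r 0 = 0 := by simp [hr, h0]
    have hr1 : r 1 = ‖z‖ := by
      rw [hr]
      simp only [h1, hc, div_mul_eq_mul_div, mul_comm ((starRingEnd ℂ) z) z,
        Complex.mul_conj, Complex.normSq_eq_norm_sq]
      rw [← Complex.ofReal_div, Complex.ofReal_re, sq, mul_div_assoc,
        div_self (norm_ne_zero_iff.mpr hz), mul_one]
    have hmono : (∫ t in (0:ℝ)..1, r t ^ n * (c * deriv γ t).re)
        ≤ ∫ t in (0:ℝ)..1, ‖γ t‖ ^ n * ‖deriv γ t‖ := by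
      apply intervalIntegral.integral_mono_on (by norm_num)
      · exact ((hrc.pow n).mul hr'c).intervalIntegrable 0 1
      · exact ((continuous_norm.comp hγ.continuous).pow n |>.mul
          hγ'.norm).intervalIntegrable 0 1
      · intro t _
        calc r t ^ n * (c * deriv γ t).re ≤ |r t ^ n * (c * deriv γ t).re| := le_abs_self _
          _ = |r t| ^ n * |(c * deriv γ t).re| := by rw [abs_mul, abs_pow]
          _ ≤ ‖γ t‖ ^ n * ‖deriv γ t‖ := by
              refine mul_le_mul ?_ ?_ (abs_nonneg _) (by positivity)
              · apply pow_le_pow_left₀ (abs_nonneg _)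
                calc |r t| ≤ ‖c * γ t‖ := Complex.abs_re_le_norm _
                  _ = ‖γ t‖ := by rw [norm_mul, hcabs, one_mul]
              · calc |(c * deriv γ t).re| ≤ ‖c * deriv γ t‖ :=
                    Complex.abs_re_le_norm _
                  _ = ‖deriv γ t‖ := by
                    rw [norm_mul, hcabs, one_mul]
    calc ‖z‖ ^ (n + 1) / (n + 1)
        = ∫ t in (0:ℝ)..1, r t ^ n * (c * deriv γ t).re := by
          rw [hFTC, hr0, hr1]
          simp [zero_pow (Nat.succ_ne_zero n)]
      _ ≤ _ := hmono

/-- For `n ≥ 1` and `z ∈ ℂ`, the `φ`-distance from `0` to `z` equals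
`|z|^{n+1}/(n+1)`: the infimum of `φ`-lengths of `C¹` paths from `0` to `z` equals
`|z|^{n+1}/(n+1)`, and it is attained by the radial segment `γ(t) = t·z`. -/
theorem phi_distance_from_zero (n : ℕ) (hn : 1 ≤ n) (z : ℂ) :
    sInf {L : ℝ | ∃ γ : ℝ → ℂ, ContDiff ℝ 1 γ ∧ γ 0 = 0 ∧ γ 1 = z ∧
        L = ∫ t in (0:ℝ)..1, ‖γ t‖ ^ n * ‖deriv γ t‖} =
      ‖z‖ ^ (n + 1) / (n + 1) ∧
    (∫ t in (0:ℝ)..1,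
        ‖(t : ℂ) * z‖ ^ n * ‖deriv (fun s : ℝ => (s : ℂ) * z) t‖) =
      ‖z‖ ^ (n + 1) / (n + 1) := by
  have hmem : ‖z‖ ^ (n + 1) / (n + 1) ∈
      {L : ℝ | ∃ γ : ℝ → ℂ, ContDiff ℝ 1 γ ∧ γ 0 = 0 ∧ γ 1 = z ∧
        L = ∫ t in (0:ℝ)..1, ‖γ t‖ ^ n * ‖deriv γ t‖} := by
    refine ⟨fun s : ℝ => (s : ℂ) * z, ?_, by simp, by simp, ?_⟩
    · exact (Complex.ofRealCLM.contDiff).mul contDiff_const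
    · exact (radial_integral n z).symm
  refine ⟨le_antisymm ?_ ?_, radial_integral n z⟩
  · exact csInf_le ⟨‖z‖ ^ (n + 1) / (n + 1), by
      rintro L ⟨γ, hγ, h0, h1, rfl⟩
      exact phi_lower_bound n z γ hγ h0 h1⟩ hmem
  · apply le_csInf ⟨_, hmem⟩
    rintro L ⟨γ, hγ, h0, h1, rfl⟩
    exact phi_lower_bound n z γ hγ h0 h1
end

section
/- Let n ≥ 1 be a natural number and let z₁, z₂ be nonzero complex numbers whose arguments satisfy |Arg z₁| < π/(2(n+1)) and |Arg z₂| < π/(2(n+1)). Then the φ-distance between z₁ and z₂ equals |z₁^{n+1} − z₂^{n+1}|/(n+1); i.e., the infimum over all C¹ paths γ : [0,1] → ℂ with γ(0) = z₁, γ(1) = z₂ of ∫₀¹ |γ(t)|ⁿ ‖γ'(t)‖ dt equals |z₁^{n+1} − z₂^{n+1}|/(n+1). -/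
open Real intervalIntegral

/-- derivative of `γ ^ (m+1)` for `γ : ℝ → ℂ`. -/
lemma hasDerivAt_pow_comp_aux (γ : ℝ → ℂ) {d : ℂ} {t : ℝ} (hd : HasDerivAt γ d t) (m : ℕ) :
    HasDerivAt (fun s => γ s ^ (m + 1)) (((m : ℂ) + 1) * γ t ^ m * d) t := by
  induction m with
  | zero => simpa using hd
  | succ k ih =>
      have h2 : HasDerivAt (fun s => γ s ^ (k + 1) * γ s)
          ((((k : ℂ) + 1) * γ t ^ k * d) * γ t + γ t ^ (k + 1) * d) t := ih.mul hd
      simp_rw [← pow_succ] at h2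
      convert h2 using 1
      push_cast
      ring

/-- Lower bound: any C¹ path has φ-length at least `|γ₀^{n+1} - γ₁^{n+1}|/(n+1)`. -/
lemma phi_lower_bound_aux (n : ℕ) (γ : ℝ → ℂ) (hγ : ContDiff ℝ 1 γ) :
    ‖γ 0 ^ (n + 1) - γ 1 ^ (n + 1)‖ / (n + 1) ≤
      ∫ t in (0:ℝ)..1, ‖γ t‖ ^ n * ‖deriv γ t‖ := by
  have hdiff : Differentiable ℝ γ := hγ.differentiable one_ne_zero
  have hcd : Continuous (deriv γ) := hγ.continuous_deriv le_rfl
  set g : ℝ → ℂ := fun t => ((n : ℂ) + 1) * γ t ^ n * deriv γ t with hgdef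
  have hg : ∀ t ∈ Set.uIcc (0:ℝ) 1, HasDerivAt (fun s => γ s ^ (n + 1)) (g t) t := fun t _ =>
    hasDerivAt_pow_comp_aux γ (hdiff t).hasDerivAt n
  have hgc : Continuous g := by
    exact (continuous_const.mul ((hγ.continuous).pow n)).mul hcd
  have hint := intervalIntegral.integral_eq_sub_of_hasDerivAt hg (hgc.intervalIntegrable 0 1)
  have hnorm : ‖∫ t in (0:ℝ)..1, g t‖ ≤ ∫ t in (0:ℝ)..1, ‖g t‖ :=
    intervalIntegral.norm_integral_le_integral_norm zero_le_one
  have hng : ∀ t, ‖g t‖ = ((n : ℝ) + 1) * (‖γ t‖ ^ n * ‖deriv γ t‖) := by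
    intro t
    simp only [hgdef, norm_mul, norm_pow]
    have : ‖(n : ℂ) + 1‖ = (n : ℝ) + 1 := by
      have : ((n : ℂ) + 1) = ((n + 1 : ℕ) : ℂ) := by push_cast; ring
      rw [this, Complex.norm_natCast]; push_cast; ring
    rw [this]; ring
  have heq : (∫ t in (0:ℝ)..1, ‖g t‖) =
      ((n : ℝ) + 1) * ∫ t in (0:ℝ)..1, ‖γ t‖ ^ n * ‖deriv γ t‖ := by
    simp_rw [hng]
    exact intervalIntegral.integral_const_mul _ _
  have hfinal : ‖γ 0 ^ (n + 1) - γ 1 ^ (n + 1)‖ ≤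
      ((n : ℝ) + 1) * ∫ t in (0:ℝ)..1, ‖γ t‖ ^ n * ‖deriv γ t‖ := by
    calc ‖γ 0 ^ (n + 1) - γ 1 ^ (n + 1)‖
        = ‖γ 1 ^ (n + 1) - γ 0 ^ (n + 1)‖ := by
          rw [← neg_sub, norm_neg]
      _ = ‖∫ t in (0:ℝ)..1, g t‖ := by rw [hint]
      _ ≤ ∫ t in (0:ℝ)..1, ‖g t‖ := hnorm
      _ = _ := heq
  rw [div_le_iff₀ (by positivity)]
  calc ‖γ 0 ^ (n + 1) - γ 1 ^ (n + 1)‖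
      ≤ ((n : ℝ) + 1) * ∫ t in (0:ℝ)..1, ‖γ t‖ ^ n * ‖deriv γ t‖ := hfinal
    _ = (∫ t in (0:ℝ)..1, ‖γ t‖ ^ n * ‖deriv γ t‖) * ((n:ℝ) + 1) := by ring


private lemma re_pow_pos_aux {m : ℕ} (hm : 0 < m) {z : ℂ} (hz : z ≠ 0)
    (h : |z.arg| < Real.pi / (2 * m)) : 0 < (z ^ m).re := by
  have habs : (0 : ℝ) < ‖z‖ := norm_pos_iff.mpr hz
  have hz' : ((‖z‖ : ℝ) : ℂ) * Complex.exp (z.arg * Complex.I) = z :=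
    Complex.norm_mul_exp_arg_mul_I z
  have hpow : z ^ m = ((‖z‖ ^ m : ℝ) : ℂ) *
      Complex.exp (((m * z.arg : ℝ) : ℂ) * Complex.I) := by
    conv_lhs => rw [← hz']
    rw [mul_pow, ← Complex.exp_nat_mul, ← Complex.ofReal_pow]
    push_cast
    ring_nf
  have hre : (z ^ m).re = ‖z‖ ^ m * Real.cos (m * z.arg) := by
    rw [hpow, Complex.re_ofReal_mul, Complex.exp_ofReal_mul_I_re]
  rw [hre]
  have hmpos : (0:ℝ) < m := by exact_mod_cast hm
  have hcos : 0 < Real.cos (m * z.arg) := by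
    apply Real.cos_pos_of_mem_Ioo
    have h2 : (m : ℝ) * |z.arg| < π / 2 := by
      have := (mul_lt_mul_of_pos_left h hmpos)
      calc (m : ℝ) * |z.arg| < (m : ℝ) * (π / (2 * m)) := this
        _ = π / 2 := by field_simp
    constructor
    · nlinarith [neg_abs_le (z.arg), mul_le_mul_of_nonneg_left (neg_abs_le z.arg) hmpos.le]
    · calc (m:ℝ) * z.arg ≤ (m:ℝ) * |z.arg| :=
          mul_le_mul_of_nonneg_left (le_abs_self _) hmpos.le
        _ < π / 2 := h2
  positivity


private noncomputable def phiTau (t : ℝ) : ℝ := (1 - Real.cos (Real.pi * t)) / 2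

private noncomputable def phiTauD (t : ℝ) : ℝ := Real.pi * Real.sin (Real.pi * t) / 2

private lemma phiTau_hasDeriv (t : ℝ) : HasDerivAt phiTau (phiTauD t) t := by
  have h1 : HasDerivAt (fun t : ℝ => π * t) π t := by
    simpa using (hasDerivAt_id t).const_mul π
  have h2 : HasDerivAt (fun y : ℝ => Real.cos (π * y)) (-Real.sin (π * t) * π) t :=
    (Real.hasDerivAt_cos (π * t)).comp t h1
  have h3 := ((hasDerivAt_const t (1 : ℝ)).sub h2).div_const 2
  rw [show phiTauD t = (0 - -Real.sin (π * t) * π) / 2 by unfold phiTauD; ring]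
  exact h3

private lemma phiTau_cont : Continuous phiTau := by
  unfold phiTau; fun_prop

private lemma phiTauD_cont : Continuous phiTauD := by
  unfold phiTauD; fun_prop

private lemma phiTau_zero : phiTau 0 = 0 := by simp [phiTau]

private lemma phiTau_one : phiTau 1 = 1 := by
  norm_num [phiTau, Real.cos_pi]

private lemma phiTau_mem (t : ℝ) : phiTau t ∈ Set.Icc (0 : ℝ) 1 := by
  unfold phiTau
  constructor
  · nlinarith [Real.cos_le_one (π * t)]
  · nlinarith [Real.neg_one_le_cos (π * t)]

private lemma phiTauD_nonneg {t : ℝ} (ht : t ∈ Set.Icc (0:ℝ) 1) : 0 ≤ phiTauD t := by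
  unfold phiTauD
  have h1 : 0 ≤ π * t := mul_nonneg Real.pi_pos.le ht.1
  have h2 : π * t ≤ π := by nlinarith [Real.pi_pos, ht.2]
  have := Real.sin_nonneg_of_nonneg_of_le_pi h1 h2
  positivity

private lemma phiTauD_integral : ∫ t in (0:ℝ)..1, phiTauD t = 1 := by
  have h := intervalIntegral.integral_eq_sub_of_hasDerivAt
    (f := phiTau) (f' := phiTauD) (fun t _ => phiTau_hasDeriv t)
    (phiTauD_cont.intervalIntegrable 0 1)
  rw [phiTau_one, phiTau_zero] at h
  simpa using h


private lemma phi_path_aux (n : ℕ) (z₁ z₂ : ℂ) (hz₁ : z₁ ≠ 0) (hz₂ : z₂ ≠ 0)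
    (harg₁ : |Complex.arg z₁| < Real.pi / (2 * (n + 1)))
    (harg₂ : |Complex.arg z₂| < Real.pi / (2 * (n + 1))) :
    ∃ γ : ℝ → ℂ, ContDiff ℝ 1 γ ∧ γ 0 = z₁ ∧ γ 1 = z₂ ∧
      (∫ t in (0:ℝ)..1, ‖γ t‖ ^ n * ‖deriv γ t‖) =
        ‖z₁ ^ (n + 1) - z₂ ^ (n + 1)‖ / (n + 1) := by
  have hk : (0:ℝ) < (n : ℝ) + 1 := by positivity
  have hpi := Real.pi_pos
  -- real parts of the powers are positive
  have hre₁ : 0 < (z₁ ^ (n + 1)).re := by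
    refine re_pow_pos_aux n.succ_pos hz₁ ?_
    push_cast; exact harg₁
  have hre₂ : 0 < (z₂ ^ (n + 1)).re := by
    refine re_pow_pos_aux n.succ_pos hz₂ ?_
    push_cast; exact harg₂
  set w₁ : ℂ := z₁ ^ (n + 1) with hw₁
  set w₂ : ℂ := z₂ ^ (n + 1) with hw₂
  set a : ℝ := ((n : ℝ) + 1)⁻¹ with ha
  set c : ℂ := (a : ℂ) with hc
  set s : ℝ → ℂ := fun t => w₁ + (phiTau t : ℂ) * (w₂ - w₁) with hs
  set γ : ℝ → ℂ := fun t => s t ^ c with hγ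
  have hapos : 0 < a := by positivity
  -- the segment stays in the right half-plane
  have hres : ∀ t, 0 < (s t).re := by
    intro t
    have hm := phiTau_mem t
    have : (s t).re = w₁.re + phiTau t * (w₂.re - w₁.re) := by
      simp [hs, Complex.add_re, Complex.mul_re, Complex.ofReal_re, Complex.ofReal_im,
        Complex.sub_re]
    rw [this]
    rcases le_total w₁.re w₂.re with hle | hle
    · nlinarith [mul_nonneg hm.1 (sub_nonneg.2 hle)]
    · nlinarith [mul_nonneg (sub_nonneg.2 hm.2) (sub_nonneg.2 hle)]
  have hsne : ∀ t, s t ≠ 0 := by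
    intro t h
    have := hres t
    rw [h] at this
    simp at this
  have hslit : ∀ t, s t ∈ Complex.slitPlane := fun t =>
    Complex.mem_slitPlane_iff.2 (Or.inl (hres t))
  have hApos : ∀ t, 0 < ‖s t‖ := fun t => norm_pos_iff.mpr (hsne t)
  -- derivative of s
  have hsd : ∀ t, HasDerivAt s ((phiTauD t : ℂ) * (w₂ - w₁)) t := by
    intro t
    exact (((phiTau_hasDeriv t).ofReal_comp).mul_const (w₂ - w₁)).const_add w₁
  -- derivative of γ
  have hγd : ∀ t, HasDerivAt γ
      (((phiTauD t : ℂ) * (w₂ - w₁)) • (c * s t ^ (c - 1))) t := by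
    intro t
    have houter : HasDerivAt (fun u : ℂ => u ^ c) (c * s t ^ (c - 1)) (s t) :=
      (Complex.hasStrictDerivAt_cpow_const (hslit t)).hasDerivAt
    exact HasDerivAt.scomp t houter (hsd t)
  -- c real and imaginary parts
  have hcre : c.re = a := by simp [hc]
  have hcim : c.im = 0 := by simp [hc]
  -- |γ t|
  have habsγ : ∀ t, ‖γ t‖ = ‖s t‖ ^ a := by
    intro t
    rw [hγ]
    rw [Complex.norm_cpow_of_ne_zero (hsne t)]
    simp [hcre, hcim]
  -- norm of the derivative
  have hnormd : ∀ t, ‖((phiTauD t : ℂ) * (w₂ - w₁)) • (c * s t ^ (c - 1))‖ =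
      |phiTauD t| * ‖w₂ - w₁‖ * (a * ‖s t‖ ^ (a - 1)) := by
    intro t
    rw [smul_eq_mul, norm_mul, norm_mul, norm_mul]
    rw [Complex.norm_real, Real.norm_eq_abs]
    have h1 : ‖c‖ = a := by
      rw [hc, Complex.norm_real, Real.norm_eq_abs, abs_of_nonneg hapos.le]
    have h2 : ‖s t ^ (c - 1)‖ = ‖s t‖ ^ (a - 1) := by
      rw [Complex.norm_cpow_of_ne_zero (hsne t)]
      simp [Complex.sub_re, Complex.sub_im, hcre, hcim]
    rw [h1, h2]
  -- the integrand is constant times phiTauD on [0,1]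
  have key : ∀ t ∈ Set.uIcc (0:ℝ) 1,
      ‖γ t‖ ^ n * ‖deriv γ t‖ =
        (‖w₂ - w₁‖ / ((n : ℝ) + 1)) * phiTauD t := by
    intro t ht
    rw [Set.uIcc_of_le zero_le_one] at ht
    have hd0 : 0 ≤ phiTauD t := phiTauD_nonneg ht
    rw [(hγd t).deriv, hnormd t, habsγ t, abs_of_nonneg hd0]
    set A := ‖s t‖ with hA
    have hpow : (A ^ a) ^ n * A ^ (a - 1) = 1 := by
      rw [← Real.rpow_natCast (A ^ a) n, ← Real.rpow_mul (hApos t).le,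
        ← Real.rpow_add (hApos t)]
      have : a * (n : ℝ) + (a - 1) = 0 := by
        rw [ha]; field_simp; ring
      rw [this, Real.rpow_zero]
    calc (A ^ a) ^ n * (phiTauD t * ‖w₂ - w₁‖ * (a * A ^ (a - 1)))
        = ((A ^ a) ^ n * A ^ (a - 1)) * (phiTauD t * ‖w₂ - w₁‖ * a) := by ring
      _ = phiTauD t * ‖w₂ - w₁‖ * a := by rw [hpow]; ring
      _ = (‖w₂ - w₁‖ / ((n : ℝ) + 1)) * phiTauD t := by
          rw [ha, div_eq_mul_inv]; ring
  -- endpoints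
  have hcinv : c = ((n + 1 : ℕ) : ℂ)⁻¹ := by
    rw [hc, ha]
    push_cast
    simp
  have harg_bound : ∀ z : ℂ, |z.arg| < Real.pi / (2 * ((n:ℝ) + 1)) →
      -(Real.pi / ((n + 1 : ℕ) : ℝ)) < z.arg ∧ z.arg ≤ Real.pi / ((n + 1 : ℕ) : ℝ) := by
    intro z h
    have h5 : Real.pi / (2 * ((n:ℝ) + 1)) < Real.pi / ((n:ℝ) + 1) := by
      rw [div_lt_div_iff₀ (by positivity) (by positivity)]
      nlinarith
    have habs := abs_lt.1 h
    constructor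
    · push_cast; linarith
    · push_cast; linarith
  have hγ0 : γ 0 = z₁ := by
    have hs0 : s 0 = w₁ := by simp [hs, phiTau_zero]
    rw [hγ]
    show s 0 ^ c = z₁
    rw [hs0, hcinv, hw₁]
    obtain ⟨h1, h2⟩ := harg_bound z₁ harg₁
    exact Complex.pow_cpow_nat_inv n.succ_ne_zero h1 h2
  have hγ1 : γ 1 = z₂ := by
    have hs1 : s 1 = w₂ := by
      rw [hs]; show w₁ + ((phiTau 1 : ℝ) : ℂ) * (w₂ - w₁) = w₂
      rw [phiTau_one]; push_cast; ring
    rw [hγ]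
    show s 1 ^ c = z₂
    rw [hs1, hcinv, hw₂]
    obtain ⟨h1, h2⟩ := harg_bound z₂ harg₂
    exact Complex.pow_cpow_nat_inv n.succ_ne_zero h1 h2
  -- smoothness
  have hscont : Continuous s := by
    apply continuous_const.add
    exact (Complex.continuous_ofReal.comp phiTau_cont).mul continuous_const
  have hsmooth : ContDiff ℝ 1 γ := by
    rw [contDiff_one_iff_deriv]
    constructor
    · exact fun t => (hγd t).differentiableAt
    · have : deriv γ = fun t => ((phiTauD t : ℂ) * (w₂ - w₁)) • (c * s t ^ (c - 1)) :=
        funext fun t => (hγd t).deriv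
      rw [this]
      apply Continuous.smul (f := fun t => (phiTauD t : ℂ) * (w₂ - w₁)) (g := fun t => c * s t ^ (c - 1))
      · exact (Complex.continuous_ofReal.comp phiTauD_cont).mul continuous_const
      · exact continuous_const.mul (hscont.cpow continuous_const fun t => hslit t)
  -- the integral
  have hval : (∫ t in (0:ℝ)..1, ‖γ t‖ ^ n * ‖deriv γ t‖) =
      ‖z₁ ^ (n + 1) - z₂ ^ (n + 1)‖ / (n + 1) := by
    rw [intervalIntegral.integral_congr key]
    rw [intervalIntegral.integral_const_mul, phiTauD_integral]
    have : ‖w₂ - w₁‖ = ‖z₁ ^ (n + 1) - z₂ ^ (n + 1)‖ := by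
      rw [hw₁, hw₂, ← neg_sub, norm_neg]
    rw [this]
    push_cast
    ring
  exact ⟨γ, hsmooth, hγ0, hγ1, hval⟩

/-- For `n ≥ 1` and nonzero `z₁, z₂` with `|Arg z₁| < π/(2(n+1))` and
`|Arg z₂| < π/(2(n+1))`, the `φ`-distance between `z₁` and `z₂` equals
`|z₁^{n+1} − z₂^{n+1}|/(n+1)`. -/
theorem phi_distance_in_sector (n : ℕ) (hn : 1 ≤ n) (z₁ z₂ : ℂ)
    (hz₁ : z₁ ≠ 0) (hz₂ : z₂ ≠ 0)
    (harg₁ : |Complex.arg z₁| < Real.pi / (2 * (n + 1)))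
    (harg₂ : |Complex.arg z₂| < Real.pi / (2 * (n + 1))) :
    sInf {L : ℝ | ∃ γ : ℝ → ℂ, ContDiff ℝ 1 γ ∧ γ 0 = z₁ ∧ γ 1 = z₂ ∧
        L = ∫ t in (0:ℝ)..1, ‖γ t‖ ^ n * ‖deriv γ t‖} =
      ‖z₁ ^ (n + 1) - z₂ ^ (n + 1)‖ / (n + 1) := by
  obtain ⟨γ, h1, h2, h3, h4⟩ := phi_path_aux n z₁ z₂ hz₁ hz₂ harg₁ harg₂
  have hlb : ∀ L ∈ {L : ℝ | ∃ γ : ℝ → ℂ, ContDiff ℝ 1 γ ∧ γ 0 = z₁ ∧ γ 1 = z₂ ∧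
      L = ∫ t in (0:ℝ)..1, ‖γ t‖ ^ n * ‖deriv γ t‖},
      ‖z₁ ^ (n + 1) - z₂ ^ (n + 1)‖ / (n + 1) ≤ L := by
    rintro L ⟨γ', hγ', ha', hb', rfl⟩
    have := phi_lower_bound_aux n γ' hγ'
    rwa [ha', hb'] at this
  apply le_antisymm
  · exact csInf_le ⟨_, hlb⟩ ⟨γ, h1, h2, h3, h4.symm⟩
  · exact le_csInf ⟨_, γ, h1, h2, h3, h4.symm⟩ hlb
end

section
/- Let n ≥ 1 be a natural number and let z₁, z₂ be nonzero complex numbers such that |Arg(z₂/z₁)| ≥ π/(n+1). Then the φ-distance between z₁ and z₂ equals (|z₁|^{n+1} + |z₂|^{n+1})/(n+1), and it is realized by the broken path consisting of the two radii from z₁ to 0 and from 0 to z₂. -/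
open Real Set Filter intervalIntegral MeasureTheory

namespace StrebelAux


lemma mono_glue : Monotone expNegInvGlue := by
  intro a b hab
  rcases le_or_gt b 0 with hb|hb
  · rw [expNegInvGlue.zero_of_nonpos (hab.trans hb), expNegInvGlue.zero_of_nonpos hb]
  rcases le_or_gt a 0 with ha|ha
  · rw [expNegInvGlue.zero_of_nonpos ha]; exact expNegInvGlue.nonneg b
  · unfold expNegInvGlue
    rw [if_neg (not_le.2 ha), if_neg (not_le.2 hb)]
    exact Real.exp_le_exp.2 (neg_le_neg (inv_anti₀ ha hab))

lemma mono_s : Monotone Real.smoothTransition := by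
  intro a b hab
  unfold Real.smoothTransition
  rw [div_le_div_iff₀ (Real.smoothTransition.pos_denom a) (Real.smoothTransition.pos_denom b)]
  have h1 : expNegInvGlue a * expNegInvGlue (1 - b) ≤ expNegInvGlue b * expNegInvGlue (1 - a) :=
    mul_le_mul (mono_glue hab) (mono_glue (by linarith)) (expNegInvGlue.nonneg _)
      (expNegInvGlue.nonneg _)
  nlinarith [h1]

lemma diff_s : Differentiable ℝ Real.smoothTransition :=
  (Real.smoothTransition.contDiff (n := 1)).differentiable (by norm_num)

lemma deriv_s_nonneg (x : ℝ) : 0 ≤ deriv Real.smoothTransition x := by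
  have hd := ((diff_s x).hasDerivAt.hasDerivWithinAt (s := Ioi x))
  rw [hasDerivWithinAt_iff_tendsto_slope] at hd
  have hne : x ∉ Ioi x := by simp
  rw [Set.diff_singleton_eq_self hne] at hd
  refine ge_of_tendsto hd ?_
  filter_upwards [self_mem_nhdsWithin] with y hy
  simpa [slope_def_field] using div_nonneg (sub_nonneg.2 (mono_s (le_of_lt hy))) (sub_nonneg.2 (le_of_lt hy))

lemma deriv_s_cont : Continuous (deriv Real.smoothTransition) := by
  refine ContDiff.continuous_deriv (Real.smoothTransition.contDiff (n := 2)) ?_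
  exact_mod_cast (by norm_num : (1:ℕ∞) ≤ 2)

lemma deriv_s_zero_of_nonpos {x : ℝ} (hx : x ≤ 0) : deriv Real.smoothTransition x = 0 := by
  have h : EqOn (deriv Real.smoothTransition) (fun _ => (0:ℝ)) (Iio 0) := by
    intro y hy
    have he : Real.smoothTransition =ᶠ[nhds y] fun _ => (0:ℝ) :=
      eventually_of_mem (Iio_mem_nhds hy)
        (fun z hz => Real.smoothTransition.zero_of_nonpos (le_of_lt hz))
    rw [he.deriv_eq]; exact deriv_const y 0
  have h2 := h.closure deriv_s_cont continuous_const
  rw [closure_Iio] at h2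
  exact h2 hx

lemma deriv_s_zero_of_one_le {x : ℝ} (hx : 1 ≤ x) : deriv Real.smoothTransition x = 0 := by
  have h : EqOn (deriv Real.smoothTransition) (fun _ => (0:ℝ)) (Ioi 1) := by
    intro y hy
    have he : Real.smoothTransition =ᶠ[nhds y] fun _ => (1:ℝ) :=
      eventually_of_mem (Ioi_mem_nhds hy)
        (fun z hz => Real.smoothTransition.one_of_one_le (le_of_lt hz))
    rw [he.deriv_eq]; exact deriv_const y 1
  have h2 := h.closure deriv_s_cont continuous_const
  rw [closure_Ioi] at h2
  exact h2 hx

noncomputable def sm := Real.smoothTransition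
noncomputable def sm' := deriv Real.smoothTransition

noncomputable def gpath (z₁ z₂ : ℂ) (t : ℝ) : ℂ :=
  ((1 - Real.smoothTransition (2*t) : ℝ) : ℂ) * z₁ +
    ((Real.smoothTransition (2*t - 1) : ℝ) : ℂ) * z₂


lemma gpath_hasDeriv (z₁ z₂ : ℂ) (t : ℝ) :
    HasDerivAt (gpath z₁ z₂)
      (((-(2 * deriv Real.smoothTransition (2*t)) : ℝ) : ℂ) * z₁ +
        (((2 * deriv Real.smoothTransition (2*t - 1)) : ℝ) : ℂ) * z₂) t := by
  have ha : HasDerivAt (fun t : ℝ => 2*t) 2 t := by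
    simpa using (hasDerivAt_id t).const_mul 2
  have hb : HasDerivAt (fun t : ℝ => 2*t - 1) 2 t := ha.sub_const 1
  have h1 : HasDerivAt (fun t : ℝ => Real.smoothTransition (2*t))
      (2 * deriv Real.smoothTransition (2*t)) t := by
    rw [mul_comm]
    exact ((diff_s (2*t)).hasDerivAt.comp t ha)
  have h2 : HasDerivAt (fun t : ℝ => Real.smoothTransition (2*t - 1))
      (2 * deriv Real.smoothTransition (2*t - 1)) t := by
    rw [mul_comm]
    exact ((diff_s (2*t - 1)).hasDerivAt.comp t hb)
  have h1' : HasDerivAt (fun t : ℝ => ((1 - Real.smoothTransition (2*t) : ℝ) : ℂ))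
      ((-(2 * deriv Real.smoothTransition (2*t)) : ℝ) : ℂ) t :=
    Complex.ofRealCLM.hasFDerivAt.comp_hasDerivAt t (h1.const_sub 1)
  have h2' : HasDerivAt (fun t : ℝ => ((Real.smoothTransition (2*t - 1) : ℝ) : ℂ))
      (((2 * deriv Real.smoothTransition (2*t - 1)) : ℝ) : ℂ) t :=
    Complex.ofRealCLM.hasFDerivAt.comp_hasDerivAt t h2
  exact (h1'.mul_const z₁).add (h2'.mul_const z₂)

lemma gpath_contDiff (z₁ z₂ : ℂ) : ContDiff ℝ 1 (gpath z₁ z₂) := by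
  have hs : ContDiff ℝ 1 Real.smoothTransition := Real.smoothTransition.contDiff
  have h2t : ContDiff ℝ 1 (fun t : ℝ => 2*t) := contDiff_const.mul contDiff_id
  have h2t1 : ContDiff ℝ 1 (fun t : ℝ => 2*t - 1) := h2t.sub contDiff_const
  have c1 : ContDiff ℝ 1 (fun t : ℝ => ((1 - Real.smoothTransition (2*t) : ℝ) : ℂ)) :=
    Complex.ofRealCLM.contDiff.comp (contDiff_const.sub (hs.comp h2t))
  have c2 : ContDiff ℝ 1 (fun t : ℝ => ((Real.smoothTransition (2*t - 1) : ℝ) : ℂ)) :=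
    Complex.ofRealCLM.contDiff.comp (hs.comp h2t1)
  exact (c1.mul contDiff_const).add (c2.mul contDiff_const)

lemma gpath_zero (z₁ z₂ : ℂ) : gpath z₁ z₂ 0 = z₁ := by
  simp [gpath, Real.smoothTransition.zero,
    Real.smoothTransition.zero_of_nonpos (by norm_num : (2*(0:ℝ) - 1) ≤ 0)]

lemma gpath_one (z₁ z₂ : ℂ) : gpath z₁ z₂ 1 = z₂ := by
  norm_num [gpath, Real.smoothTransition.one_of_one_le (show (1:ℝ) ≤ 2 by norm_num),
    Real.smoothTransition.one]
lemma h2t (t : ℝ) : HasDerivAt (fun t : ℝ => Real.smoothTransition (2*t))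
    (2 * deriv Real.smoothTransition (2*t)) t := by
  have ha : HasDerivAt (fun t : ℝ => 2*t) 2 t := by
    simpa using (hasDerivAt_id t).const_mul 2
  rw [mul_comm]; exact (diff_s (2*t)).hasDerivAt.comp t ha

lemma h2t1 (t : ℝ) : HasDerivAt (fun t : ℝ => Real.smoothTransition (2*t - 1))
    (2 * deriv Real.smoothTransition (2*t - 1)) t := by
  have ha : HasDerivAt (fun t : ℝ => 2*t - 1) 2 t := by
    simpa using ((hasDerivAt_id t).const_mul 2).sub_const 1
  rw [mul_comm]; exact (diff_s (2*t-1)).hasDerivAt.comp t ha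

lemma gpath_integral (n : ℕ) (z₁ z₂ : ℂ) :
    (∫ t in (0:ℝ)..1, ‖gpath z₁ z₂ t‖ ^ n * ‖deriv (gpath z₁ z₂) t‖)
      = (‖z₁‖ ^ (n + 1) + ‖z₂‖ ^ (n + 1)) / (n + 1) := by
  have les : ∀ x : ℝ, Real.smoothTransition x ≤ 1 := Real.smoothTransition.le_one
  have nns : ∀ x : ℝ, 0 ≤ Real.smoothTransition x := Real.smoothTransition.nonneg
  set F := fun t => ‖gpath z₁ z₂ t‖ ^ n * ‖deriv (gpath z₁ z₂) t‖ with hF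
  have hFc : Continuous F :=
    ((continuous_norm.comp (gpath_contDiff z₁ z₂).continuous).pow n).mul
      (((gpath_contDiff z₁ z₂).continuous_deriv le_rfl).norm)
  set G₁ := fun t : ℝ => -‖z₁‖ ^ (n+1) / (↑n+1) *
      (↑(n+1) * (1 - Real.smoothTransition (2*t)) ^ (n + 1 - 1) *
        -(2 * deriv Real.smoothTransition (2*t))) with hG₁
  set G₂ := fun t : ℝ => ‖z₂‖ ^ (n+1) / (↑n+1) *
      (↑(n+1) * (Real.smoothTransition (2*t-1)) ^ (n + 1 - 1) *
        (2 * deriv Real.smoothTransition (2*t-1))) with hG₂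
  have c2t : Continuous fun t : ℝ => 2*t := continuous_const.mul continuous_id
  have c2t1 : Continuous fun t : ℝ => 2*t - 1 := c2t.sub continuous_const
  have hG₁c : Continuous G₁ := by
    apply continuous_const.mul
    exact (continuous_const.mul ((continuous_const.sub
      (Real.smoothTransition.continuous.comp c2t)).pow _)).mul
      ((continuous_const.mul (deriv_s_cont.comp c2t)).neg)
  have hG₂c : Continuous G₂ := by
    apply continuous_const.mul
    exact (continuous_const.mul ((Real.smoothTransition.continuous.comp c2t1).pow _)).mul
      (continuous_const.mul (deriv_s_cont.comp c2t1))
  have hnne : ((n:ℝ) + 1) ≠ 0 := by positivity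
  have heq1 : Set.EqOn F G₁ (uIcc (0:ℝ) (1/2)) := by
    rw [uIcc_of_le (by norm_num)]
    intro t ht
    have e1 : Real.smoothTransition (2*t - 1) = 0 :=
      Real.smoothTransition.zero_of_nonpos (by linarith [ht.2])
    have e2 : deriv Real.smoothTransition (2*t - 1) = 0 :=
      deriv_s_zero_of_nonpos (by linarith [ht.2])
    have hnn : 0 ≤ 1 - Real.smoothTransition (2*t) := by linarith [les (2*t)]
    have hd := (gpath_hasDeriv z₁ z₂ t).deriv
    show ‖gpath z₁ z₂ t‖ ^ n * ‖deriv (gpath z₁ z₂) t‖ = G₁ t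
    rw [hd]
    simp only [gpath, e1, e2, mul_zero, zero_mul, add_zero, Complex.ofReal_zero]
    rw [norm_mul, Complex.norm_real, Real.norm_eq_abs, abs_of_nonneg hnn]
    rw [norm_mul, Complex.norm_real, Real.norm_eq_abs, abs_neg,
      abs_of_nonneg (by have := deriv_s_nonneg (2*t); linarith : (0:ℝ) ≤ 2 * deriv Real.smoothTransition (2*t))]
    simp only [hG₁, Nat.add_sub_cancel]
    rw [mul_pow]
    field_simp
    push_cast
    ring
  have heq2 : Set.EqOn F G₂ (uIcc (1/2 : ℝ) 1) := by
    rw [uIcc_of_le (by norm_num)]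
    intro t ht
    have e1 : Real.smoothTransition (2*t) = 1 :=
      Real.smoothTransition.one_of_one_le (by linarith [ht.1])
    have e2 : deriv Real.smoothTransition (2*t) = 0 := by
      have h : Set.EqOn (deriv Real.smoothTransition) (fun _ => (0:ℝ)) (Ioi 1) := by
        intro y hy
        have he : Real.smoothTransition =ᶠ[nhds y] fun _ => (1:ℝ) :=
          eventually_of_mem (Ioi_mem_nhds hy)
            (fun z hz => Real.smoothTransition.one_of_one_le (le_of_lt hz))
        rw [he.deriv_eq]; exact deriv_const y 1
      have h2 := h.closure deriv_s_cont continuous_const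
      rw [closure_Ioi] at h2
      exact h2 (by simp only [mem_Ici]; linarith [ht.1])
    have hnn : 0 ≤ Real.smoothTransition (2*t - 1) := nns _
    have hd := (gpath_hasDeriv z₁ z₂ t).deriv
    show ‖gpath z₁ z₂ t‖ ^ n * ‖deriv (gpath z₁ z₂) t‖ = G₂ t
    rw [hd]
    simp only [gpath, e1, e2, sub_self, mul_zero, neg_zero, zero_mul, Complex.ofReal_zero,
      zero_add]
    rw [norm_mul, Complex.norm_real, Real.norm_eq_abs, abs_of_nonneg hnn]
    rw [norm_mul, Complex.norm_real, Real.norm_eq_abs,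
      abs_of_nonneg (by have := deriv_s_nonneg (2*t-1); linarith : (0:ℝ) ≤ 2 * deriv Real.smoothTransition (2*t - 1))]
    simp only [hG₂, Nat.add_sub_cancel]
    rw [mul_pow]
    field_simp
    push_cast
    ring
  have hΦ₁ : ∀ t : ℝ, HasDerivAt
      (fun y => -‖z₁‖ ^ (n+1) / (↑n+1) * (1 - Real.smoothTransition (2*y)) ^ (n+1))
      (G₁ t) t := by
    intro t
    have h1 : HasDerivAt (fun t : ℝ => 1 - Real.smoothTransition (2*t))
        (-(2 * deriv Real.smoothTransition (2*t))) t := (h2t t).const_sub 1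
    exact (h1.pow (n+1)).const_mul _
  have hΦ₂ : ∀ t : ℝ, HasDerivAt
      (fun y => ‖z₂‖ ^ (n+1) / (↑n+1) * (Real.smoothTransition (2*y-1)) ^ (n+1))
      (G₂ t) t := by
    intro t
    exact ((h2t1 t).pow (n+1)).const_mul _
  have hi1 : (∫ t in (0:ℝ)..(1/2), F t) = ‖z₁‖ ^ (n+1) / (↑n+1) := by
    rw [integral_congr heq1,
      integral_eq_sub_of_hasDerivAt (fun x _ => hΦ₁ x) (hG₁c.intervalIntegrable _ _)]
    norm_num [Real.smoothTransition.one, Real.smoothTransition.zero]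
    ring
  have hi2 : (∫ t in (1/2 : ℝ)..1, F t) = ‖z₂‖ ^ (n+1) / (↑n+1) := by
    rw [integral_congr heq2,
      integral_eq_sub_of_hasDerivAt (fun x _ => hΦ₂ x) (hG₂c.intervalIntegrable _ _)]
    norm_num [Real.smoothTransition.one, Real.smoothTransition.zero]
    try ring
  rw [← integral_add_adjacent_intervals (a := (0:ℝ)) (b := 1/2) (c := 1)
    (hFc.intervalIntegrable _ _) (hFc.intervalIntegrable _ _), hi1, hi2]
  ring

lemma deriv_line (z : ℂ) (t : ℝ) : deriv (fun s : ℝ => (s : ℂ) * z) t = z := by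
  have h : HasDerivAt (fun s : ℝ => (s : ℂ) * z) ((1 : ℂ) * z) t :=
    (Complex.ofRealCLM.hasDerivAt.mul_const z).congr_deriv (by simp)
  simpa using h.deriv

lemma deriv_line' (z : ℂ) (t : ℝ) : deriv (fun s : ℝ => ((1 - s : ℝ) : ℂ) * z) t = -z := by
  have h1 : HasDerivAt (fun s : ℝ => ((1 - s : ℝ) : ℂ)) (-1 : ℂ) t := by
    have h2 := (Complex.ofRealCLM.hasDerivAt (x := t)).const_sub (1 : ℂ)
    have h3 : (fun s : ℝ => (1 : ℂ) - Complex.ofRealCLM s) = fun s : ℝ => ((1 - s : ℝ) : ℂ) := by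
      funext s; push_cast [Complex.ofRealCLM_apply]; ring
    rw [h3] at h2
    simpa using h2
  have h : HasDerivAt (fun s : ℝ => ((1 - s : ℝ) : ℂ) * z) ((-1 : ℂ) * z) t := h1.mul_const z
  simpa using h.deriv

lemma radial2 (n : ℕ) (z : ℂ) :
    (∫ t in (0:ℝ)..1, ‖(t : ℂ) * z‖ ^ n * ‖deriv (fun s : ℝ => (s : ℂ) * z) t‖)
      = ‖z‖ ^ (n + 1) / (n + 1) := by
  have : ∀ t ∈ Set.uIcc (0:ℝ) 1,
      ‖(t : ℂ) * z‖ ^ n * ‖deriv (fun s : ℝ => (s : ℂ) * z) t‖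
        = t ^ n * (‖z‖ ^ (n+1)) := by
    intro t ht
    rw [deriv_line]
    rw [Set.uIcc_of_le (by norm_num)] at ht
    simp [norm_mul, Complex.norm_real, abs_of_nonneg ht.1, mul_pow, pow_succ]
    ring
  rw [intervalIntegral.integral_congr this, intervalIntegral.integral_mul_const,
    integral_pow]
  norm_num; ring

lemma radial1 (n : ℕ) (z : ℂ) :
    (∫ t in (0:ℝ)..1, ‖((1 - t : ℝ) : ℂ) * z‖ ^ n *
        ‖deriv (fun s : ℝ => ((1 - s : ℝ) : ℂ) * z) t‖)
      = ‖z‖ ^ (n + 1) / (n + 1) := by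
  have : ∀ t ∈ Set.uIcc (0:ℝ) 1,
      ‖((1 - t : ℝ) : ℂ) * z‖ ^ n * ‖deriv (fun s : ℝ => ((1 - s : ℝ) : ℂ) * z) t‖
        = (1 - t) ^ n * (‖z‖ ^ (n+1)) := by
    intro t ht
    rw [deriv_line']
    rw [Set.uIcc_of_le (by norm_num)] at ht
    rw [norm_mul, Complex.norm_real, Real.norm_eq_abs, abs_of_nonneg (by linarith [ht.2] : (0:ℝ) ≤ 1 - t)]
    simp only [norm_neg, mul_pow, pow_succ]
    ring
  rw [intervalIntegral.integral_congr this, intervalIntegral.integral_mul_const]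
  have : (∫ t in (0:ℝ)..1, (1 - t) ^ n) = ∫ x in (0:ℝ)..1, x ^ n := by
    have := intervalIntegral.integral_comp_sub_left (a := (0:ℝ)) (b := 1) (fun x => x ^ n) 1
    simpa using this
  rw [this, integral_pow]
  norm_num; ring

-- derivative of t ↦ |γ t|^(n+1), via normSq and rpow
lemma normSq_hasDeriv (γ : ℝ → ℂ) (hγ : ContDiff ℝ 1 γ) (t : ℝ) :
    HasDerivAt (fun t => Complex.normSq (γ t))
      (2 * ((γ t).re * (deriv γ t).re + (γ t).im * (deriv γ t).im)) t := by
  have hγd : HasDerivAt γ (deriv γ t) t :=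
    ((hγ.differentiable one_ne_zero) t).hasDerivAt
  have hre : HasDerivAt (fun t => (γ t).re) ((deriv γ t).re) t :=
    Complex.reCLM.hasFDerivAt.comp_hasDerivAt t hγd
  have him : HasDerivAt (fun t => (γ t).im) ((deriv γ t).im) t :=
    Complex.imCLM.hasFDerivAt.comp_hasDerivAt t hγd
  have h := (hre.mul hre).add (him.mul him)
  have hfun : (fun t => Complex.normSq (γ t)) = fun t => (γ t).re * (γ t).re + (γ t).im * (γ t).im := by
    funext s; rw [Complex.normSq_apply]
  rw [hfun]
  exact h.congr_deriv (by ring)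

lemma cauchy2 (z w : ℂ) :
    |2 * (z.re * w.re + z.im * w.im)| ≤ 2 * ‖z‖ * ‖w‖ := by
  have h1 : (2 * (z.re * w.re + z.im * w.im))^2 ≤ (2 * ‖z‖ * ‖w‖)^2 := by
    have hz : ‖z‖ ^ 2 = z.re^2 + z.im^2 := by
      rw [Complex.sq_norm, Complex.normSq_apply]; ring
    have hw : ‖w‖ ^ 2 = w.re^2 + w.im^2 := by
      rw [Complex.sq_norm, Complex.normSq_apply]; ring
    nlinarith [sq_nonneg (z.re * w.im - z.im * w.re), sq_nonneg (‖z‖ * ‖w‖)]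
  have h2 : |2 * (z.re * w.re + z.im * w.im)| = Real.sqrt ((2 * (z.re * w.re + z.im * w.im))^2) :=
    (Real.sqrt_sq_eq_abs _).symm
  rw [h2]
  rw [show (2 * ‖z‖ * ‖w‖) = Real.sqrt ((2 * ‖z‖ * ‖w‖)^2) from
    (Real.sqrt_sq (by positivity)).symm]
  exact Real.sqrt_le_sqrt h1

lemma pow_abs_hasDeriv (n : ℕ) (hn : 1 ≤ n) (γ : ℝ → ℂ) (hγ : ContDiff ℝ 1 γ) (t : ℝ) :
    HasDerivAt (fun t => Complex.normSq (γ t) ^ (((n:ℝ)+1)/2))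
      ((((n:ℝ)+1)/2) * Complex.normSq (γ t) ^ (((n:ℝ)+1)/2 - 1) *
        (2 * ((γ t).re * (deriv γ t).re + (γ t).im * (deriv γ t).im))) t := by
  have hp : (1:ℝ) ≤ ((n:ℝ)+1)/2 := by
    have : (1:ℝ) ≤ (n:ℝ) := by exact_mod_cast hn
    linarith
  exact (Real.hasDerivAt_rpow_const (p := ((n:ℝ)+1)/2) (Or.inr hp)).comp t
    (normSq_hasDeriv γ hγ t)

lemma normSq_rpow_eq (n : ℕ) (z : ℂ) :
    Complex.normSq z ^ (((n:ℝ)+1)/2) = ‖z‖ ^ (n+1) := by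
  rw [← Complex.sq_norm]
  rw [← Real.rpow_natCast (‖z‖) 2, ← Real.rpow_natCast (‖z‖) (n+1),
    ← Real.rpow_mul (norm_nonneg z)]
  congr 1
  push_cast
  ring

lemma normSq_rpow_eq' (n : ℕ) (hn : 1 ≤ n) (z : ℂ) :
    Complex.normSq z ^ (((n:ℝ)+1)/2 - 1) = ‖z‖ ^ (n-1) := by
  rw [← Complex.sq_norm]
  rw [← Real.rpow_natCast (‖z‖) 2, ← Real.rpow_natCast (‖z‖) (n-1),
    ← Real.rpow_mul (norm_nonneg z)]
  congr 1
  have : (1:ℝ) ≤ (n:ℝ) := by exact_mod_cast hn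
  have hcast : ((n - 1 : ℕ) : ℝ) = (n:ℝ) - 1 := by
    have := Nat.cast_sub hn (R := ℝ); simpa using this
  rw [hcast]; ring

lemma caseA_bound (n : ℕ) (hn : 1 ≤ n) (γ : ℝ → ℂ) (hγ : ContDiff ℝ 1 γ)
    (a b : ℝ) (hab : a ≤ b) :
    |‖γ b‖ ^ (n+1) - ‖γ a‖ ^ (n+1)| / (n+1)
      ≤ ∫ t in a..b, ‖γ t‖ ^ n * ‖deriv γ t‖ := by
  set D := fun t => (((n:ℝ)+1)/2) * Complex.normSq (γ t) ^ ((((n:ℝ)+1)/2) - 1) *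
    (2 * ((γ t).re * (deriv γ t).re + (γ t).im * (deriv γ t).im)) with hD
  have hγc : Continuous γ := hγ.continuous
  have hγd : Continuous (deriv γ) := hγ.continuous_deriv le_rfl
  have hDeq : D = fun t => (((n:ℝ)+1)/2) * ‖γ t‖ ^ (n-1) *
      (2 * ((γ t).re * (deriv γ t).re + (γ t).im * (deriv γ t).im)) := by
    funext t; simp only [hD]; rw [normSq_rpow_eq' n hn]
  have hDc : Continuous D := by
    rw [hDeq]
    exact (continuous_const.mul ((continuous_norm.comp hγc).pow (n-1))).mul
      (continuous_const.mul
        (((Complex.continuous_re.comp hγc).mul (Complex.continuous_re.comp hγd)).add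
          ((Complex.continuous_im.comp hγc).mul (Complex.continuous_im.comp hγd))))
  have hFTC : (∫ t in a..b, D t) = ‖γ b‖ ^ (n+1) - ‖γ a‖ ^ (n+1) := by
    have := integral_eq_sub_of_hasDerivAt
      (f := fun t => Complex.normSq (γ t) ^ (((n:ℝ)+1)/2))
      (f' := D) (a := a) (b := b)
      (fun x _ => pow_abs_hasDeriv n hn γ hγ x) (hDc.intervalIntegrable _ _)
    rw [this]
    simp only [normSq_rpow_eq]
  have hbound : ∀ t, |D t| ≤ ((n:ℝ)+1) * (‖γ t‖ ^ n * ‖deriv γ t‖) := by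
    intro t
    rw [hDeq]
    have h1 := cauchy2 (γ t) (deriv γ t)
    have hple : 0 ≤ (((n:ℝ)+1)/2) := by positivity
    have habs : 0 ≤ ‖γ t‖ ^ (n-1) := by positivity
    rw [abs_mul, abs_mul, abs_of_nonneg hple, abs_of_nonneg habs]
    have h2 : (((n:ℝ)+1)/2) * ‖γ t‖ ^ (n-1) * |2 * ((γ t).re * (deriv γ t).re + (γ t).im * (deriv γ t).im)|
        ≤ (((n:ℝ)+1)/2) * ‖γ t‖ ^ (n-1) * (2 * ‖γ t‖ * ‖deriv γ t‖) := by
      apply mul_le_mul_of_nonneg_left h1 (by positivity)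
    refine h2.trans (le_of_eq ?_)
    have hpow : ‖γ t‖ ^ (n-1) * ‖γ t‖ = ‖γ t‖ ^ n := by
      rw [← pow_succ]
      congr 1
      omega
    rw [← hpow]
    field_simp
  have habs_int : |∫ t in a..b, D t| ≤ ∫ t in a..b, ((n:ℝ)+1) * (‖γ t‖ ^ n * ‖deriv γ t‖) := by
    refine (intervalIntegral.abs_integral_le_integral_abs hab).trans ?_
    apply intervalIntegral.integral_mono_on hab (hDc.abs.intervalIntegrable _ _)
    · exact ((continuous_const.mul (((continuous_norm.comp hγc).pow n).mul
        hγd.norm))).intervalIntegrable _ _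
    · exact fun x _ => hbound x
  rw [intervalIntegral.integral_const_mul] at habs_int
  rw [hFTC] at habs_int
  rw [div_le_iff₀ (by positivity : (0:ℝ) < (n:ℝ)+1)]
  calc |‖γ b‖ ^ (n+1) - ‖γ a‖ ^ (n+1)|
      ≤ ((n:ℝ)+1) * ∫ t in a..b, ‖γ t‖ ^ n * ‖deriv γ t‖ := habs_int
    _ = (∫ t in a..b, ‖γ t‖ ^ n * ‖deriv γ t‖) * ((n:ℝ)+1) := by ring

lemma polar_re (c : ℂ) (v : ℂ) (θ : ℝ) :
    (c * Complex.exp v * Complex.exp (-(θ:ℂ) * Complex.I)).re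
      = ‖c‖ * Real.exp v.re * Real.cos (Complex.arg c + v.im - θ) := by
  conv_lhs => rw [← Complex.norm_mul_exp_arg_mul_I c]
  rw [mul_assoc, mul_assoc, ← Complex.exp_add, ← Complex.exp_add]
  rw [Complex.re_ofReal_mul, Complex.exp_re]
  have h1 : ((Complex.arg c : ℂ) * Complex.I + (v + -(θ:ℂ) * Complex.I)).re = v.re := by simp
  have h2 : ((Complex.arg c : ℂ) * Complex.I + (v + -(θ:ℂ) * Complex.I)).im
      = Complex.arg c + v.im - θ := by simp; ring
  rw [h1, h2, mul_assoc]

lemma segment_bound (c : ℂ) (v g : ℝ → ℂ)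
    (hw : ∀ t ∈ Icc (0:ℝ) 1, HasDerivAt (fun s => c * Complex.exp (v s)) (g t) t)
    (hg : ContinuousOn g (Icc 0 1)) (θ α β : ℝ) (hα : α ∈ Icc (0:ℝ) 1) (hβ : β ∈ Icc (0:ℝ) 1)
    (hαβ : α ≤ β) :
    |(c * Complex.exp (v β) * Complex.exp (-(θ:ℂ) * Complex.I)).re -
      (c * Complex.exp (v α) * Complex.exp (-(θ:ℂ) * Complex.I)).re|
      ≤ ∫ t in α..β, ‖g t‖ := by
  set F := fun t => (c * Complex.exp (v t) * Complex.exp (-(θ:ℂ) * Complex.I)).re with hF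
  set F' := fun t => (g t * Complex.exp (-(θ:ℂ) * Complex.I)).re with hF'
  have hFd : ∀ t ∈ Icc (0:ℝ) 1, HasDerivAt F (F' t) t := by
    intro t ht
    exact Complex.reCLM.hasFDerivAt.comp_hasDerivAt t ((hw t ht).mul_const _)
  have hF'c : ContinuousOn F' (Icc 0 1) :=
    Complex.continuous_re.comp_continuousOn (hg.mul continuousOn_const)
  have hsub : uIcc α β ⊆ Icc (0:ℝ) 1 := by
    rw [uIcc_of_le hαβ]
    exact Icc_subset_Icc hα.1 hβ.2
  have hFTC : (∫ t in α..β, F' t) = F β - F α :=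
    integral_eq_sub_of_hasDerivAt (fun x hx => hFd x (hsub hx))
      ((hF'c.mono hsub).intervalIntegrable)
  have h1 : |F β - F α| ≤ ∫ t in α..β, |F' t| := by
    rw [← hFTC]
    exact intervalIntegral.abs_integral_le_integral_abs hαβ
  refine h1.trans ?_
  apply intervalIntegral.integral_mono_on hαβ (((hF'c.mono hsub).abs).intervalIntegrable)
    ((hg.norm.mono hsub).intervalIntegrable)
  intro x _
  calc |F' x| ≤ ‖g x * Complex.exp (-(θ:ℂ) * Complex.I)‖ := Complex.abs_re_le_norm _
    _ = ‖g x‖ := by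
        rw [norm_mul]
        have : ‖Complex.exp (-(θ:ℂ) * Complex.I)‖ = 1 := by
          rw [show -(θ:ℂ) * Complex.I = ((-θ : ℝ):ℂ) * Complex.I by push_cast; ring]
          exact Complex.norm_exp_ofReal_mul_I _
        rw [this, mul_one]

lemma euclid (c : ℂ) (v g : ℝ → ℂ)
    (hw : ∀ t ∈ Icc (0:ℝ) 1, HasDerivAt (fun s => c * Complex.exp (v s)) (g t) t)
    (hvc : ContinuousOn v (Icc 0 1))
    (hg : ContinuousOn g (Icc 0 1))
    (hΔ : Real.pi ≤ (v 1).im - (v 0).im) :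
    ‖c‖ * Real.exp (v 0).re + ‖c‖ * Real.exp (v 1).re
      ≤ ∫ t in (0:ℝ)..1, ‖g t‖ := by
  set ψ := fun t => Complex.arg c + (v t).im with hψdef
  have hψc : ContinuousOn ψ (Icc 0 1) :=
    continuousOn_const.add (Complex.continuous_im.comp_continuousOn hvc)
  have hψΔ : Real.pi ≤ ψ 1 - ψ 0 := by simp only [hψdef]; linarith
  have hπ := Real.pi_pos
  set k₁ := ψ 0 + Real.pi/2 with hk₁
  set k₂ := ψ 1 - Real.pi/2 with hk₂
  have hk₁₂ : k₁ ≤ k₂ := by rw [hk₁, hk₂]; linarith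
  -- S₁ and t₁
  set S₁ := Icc (0:ℝ) 1 ∩ ψ ⁻¹' {k₁} with hS₁
  have hS₁closed : IsClosed S₁ :=
    hψc.preimage_isClosed_of_isClosed isClosed_Icc isClosed_singleton
  have hS₁cpt : IsCompact S₁ :=
    isCompact_Icc.of_isClosed_subset hS₁closed inter_subset_left
  have hS₁ne : S₁.Nonempty := by
    have hmem : k₁ ∈ Icc (ψ 0) (ψ 1) := ⟨by rw [hk₁]; linarith, by rw [hk₁]; linarith⟩
    obtain ⟨x, hx, hψx⟩ := intermediate_value_Icc zero_le_one hψc hmem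
    exact ⟨x, hx, by simp [hψx]⟩
  set t₁ := sInf S₁ with ht₁def
  have ht₁ : t₁ ∈ S₁ := hS₁cpt.sInf_mem hS₁ne
  -- S₂ and t₂
  set S₂ := Icc (0:ℝ) 1 ∩ ψ ⁻¹' {k₂} with hS₂
  have hS₂closed : IsClosed S₂ :=
    hψc.preimage_isClosed_of_isClosed isClosed_Icc isClosed_singleton
  have hS₂cpt : IsCompact S₂ :=
    isCompact_Icc.of_isClosed_subset hS₂closed inter_subset_left
  have hS₂ne : S₂.Nonempty := by
    have hmem : k₂ ∈ Icc (ψ 0) (ψ 1) := ⟨by rw [hk₂]; linarith, by rw [hk₂]; linarith⟩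
    obtain ⟨x, hx, hψx⟩ := intermediate_value_Icc zero_le_one hψc hmem
    exact ⟨x, hx, by simp [hψx]⟩
  set t₂ := sSup S₂ with ht₂def
  have ht₂ : t₂ ∈ S₂ := hS₂cpt.sSup_mem hS₂ne
  have hψt₁ : ψ t₁ = k₁ := ht₁.2
  have hψt₂ : ψ t₂ = k₂ := ht₂.2
  have ht₁I : t₁ ∈ Icc (0:ℝ) 1 := ht₁.1
  have ht₂I : t₂ ∈ Icc (0:ℝ) 1 := ht₂.1
  -- t₁ ≤ t₂
  have ht₁₂ : t₁ ≤ t₂ := by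
    by_contra hcon
    push_neg at hcon
    have hsub : Icc t₁ 1 ⊆ Icc (0:ℝ) 1 := Icc_subset_Icc ht₁I.1 le_rfl
    have hmem : k₂ ∈ Icc (ψ t₁) (ψ 1) := ⟨by rw [hψt₁]; exact hk₁₂, by rw [hk₂]; linarith⟩
    obtain ⟨x, hx, hψx⟩ := intermediate_value_Icc ht₁I.2 (hψc.mono hsub) hmem
    have hxS₂ : x ∈ S₂ := ⟨hsub hx, by simp [hψx]⟩
    have : x ≤ t₂ := le_csSup hS₂cpt.bddAbove hxS₂
    have : t₁ ≤ t₂ := hx.1.trans this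
    linarith
  -- first segment
  have hb₁ := segment_bound c v g hw hg (ψ 0) 0 t₁ (left_mem_Icc.2 zero_le_one) ht₁I ht₁I.1
  have hb₂ := segment_bound c v g hw hg (ψ 1) t₂ 1 ht₂I (right_mem_Icc.2 zero_le_one) ht₂I.2
  rw [polar_re, polar_re] at hb₁ hb₂
  have hv₀ : Complex.arg c + (v 0).im - ψ 0 = 0 := by rw [hψdef]; ring
  have hv₁ : Complex.arg c + (v 1).im - ψ 1 = 0 := by rw [hψdef]; ring
  have hvt₁ : Complex.arg c + (v t₁).im - ψ 0 = Real.pi/2 := by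
    have : ψ t₁ = ψ 0 + Real.pi/2 := by rw [hψt₁, hk₁]
    rw [hψdef] at this ⊢
    linarith [this]
  have hvt₂ : Complex.arg c + (v t₂).im - ψ 1 = -(Real.pi/2) := by
    have : ψ t₂ = ψ 1 - Real.pi/2 := by rw [hψt₂, hk₂]
    rw [hψdef] at this ⊢
    linarith [this]
  rw [hv₀, hvt₁, Real.cos_zero, Real.cos_pi_div_two, mul_zero, mul_one, zero_sub, abs_neg] at hb₁
  rw [hv₁, hvt₂, Real.cos_zero, Real.cos_neg, Real.cos_pi_div_two, mul_zero, mul_one] at hb₂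
  have h₁ : ‖c‖ * Real.exp (v 0).re ≤ ∫ t in (0:ℝ)..t₁, ‖g t‖ :=
    (le_abs_self _).trans hb₁
  have h₂ : ‖c‖ * Real.exp (v 1).re ≤ ∫ t in t₂..1, ‖g t‖ := by
    refine le_trans ?_ hb₂
    rw [sub_zero]
    exact le_abs_self _
  have hmid : 0 ≤ ∫ t in t₁..t₂, ‖g t‖ :=
    intervalIntegral.integral_nonneg ht₁₂ (fun x _ => norm_nonneg _)
  have hint : ∀ α β : ℝ, α ∈ Icc (0:ℝ) 1 → β ∈ Icc (0:ℝ) 1 →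
      IntervalIntegrable (fun t => ‖g t‖) MeasureTheory.volume α β := by
    intro α β hα hβ
    apply ContinuousOn.intervalIntegrable
    apply hg.norm.mono
    intro x hx
    rcases le_total α β with hab | hab
    · rw [uIcc_of_le hab] at hx; exact ⟨hα.1.trans hx.1, hx.2.trans hβ.2⟩
    · rw [uIcc_of_ge hab] at hx; exact ⟨hβ.1.trans hx.1, hx.2.trans hα.2⟩
  have hsplit : (∫ t in (0:ℝ)..1, ‖g t‖)
      = (∫ t in (0:ℝ)..t₁, ‖g t‖) + (∫ t in t₁..t₂, ‖g t‖) + (∫ t in t₂..1, ‖g t‖) := by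
    rw [integral_add_adjacent_intervals (hint 0 t₁ (left_mem_Icc.2 zero_le_one) ht₁I)
      (hint t₁ t₂ ht₁I ht₂I),
      integral_add_adjacent_intervals (hint 0 t₂ (left_mem_Icc.2 zero_le_one) ht₂I)
      (hint t₂ 1 ht₂I (right_mem_Icc.2 zero_le_one))]
  rw [hsplit]
  linarith
lemma caseB (n : ℕ) (z₁ z₂ : ℂ) (hz₁ : z₁ ≠ 0) (hz₂ : z₂ ≠ 0)
    (harg : Real.pi / (n + 1) ≤ |Complex.arg (z₂ / z₁)|)
    (γ : ℝ → ℂ) (hγ : ContDiff ℝ 1 γ) (hγ0 : γ 0 = z₁) (hγ1 : γ 1 = z₂)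
    (hne : ∀ t ∈ Icc (0:ℝ) 1, γ t ≠ 0) :
    (‖z₁‖ ^ (n + 1) + ‖z₂‖ ^ (n + 1)) / (n + 1)
      ≤ ∫ t in (0:ℝ)..1, ‖γ t‖ ^ n * ‖deriv γ t‖ := by
  have hγc : Continuous γ := hγ.continuous
  have hγd : Continuous (deriv γ) := hγ.continuous_deriv le_rfl
  set f := fun t => if γ t = 0 then 0 else deriv γ t / γ t with hf
  have hfm : Measurable f :=
    Measurable.ite (isClosed_eq hγc continuous_const).measurableSet measurable_const
      (hγd.measurable.div hγc.measurable)
  have hfc : ∀ t ∈ Icc (0:ℝ) 1, ContinuousAt f t := by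
    intro t ht
    have hev : ∀ᶠ s in nhds t, γ s ≠ 0 := hγc.continuousAt.eventually_ne (hne t ht)
    have heq : f =ᶠ[nhds t] fun s => deriv γ s / γ s := by
      filter_upwards [hev] with s hs
      simp [hf, hs]
    exact ((hγd.continuousAt).div hγc.continuousAt (hne t ht)).congr heq.symm
  have hfcOn : ContinuousOn f (Icc 0 1) := fun t ht => (hfc t ht).continuousWithinAt
  have hfi : ∀ t ∈ Icc (0:ℝ) 1, IntervalIntegrable f MeasureTheory.volume 0 t := by
    intro t ht
    apply (hfcOn.mono ?_).intervalIntegrable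
    rw [uIcc_of_le ht.1]
    exact Icc_subset_Icc le_rfl ht.2
  set H := fun t => ∫ s in (0:ℝ)..t, f s with hH
  have hHd : ∀ t ∈ Icc (0:ℝ) 1, HasDerivAt H (f t) t := by
    intro t ht
    exact intervalIntegral.integral_hasDerivAt_right (hfi t ht)
      hfm.stronglyMeasurable.stronglyMeasurableAtFilter (hfc t ht)
  have hHc : ContinuousOn H (Icc 0 1) := fun t ht => ((hHd t ht).continuousAt).continuousWithinAt
  have hH0 : H 0 = 0 := intervalIntegral.integral_same
  -- γ t = γ 0 * exp (H t) on [0,1]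
  have hηd : ∀ t ∈ Icc (0:ℝ) 1, HasDerivAt (fun s => γ s * Complex.exp (-H s)) 0 t := by
    intro t ht
    have hd1 : HasDerivAt γ (deriv γ t) t := ((hγ.differentiable one_ne_zero) t).hasDerivAt
    have hd2 : HasDerivAt (fun s => Complex.exp (-H s)) (Complex.exp (-H t) * (-f t)) t :=
      ((hHd t ht).neg).cexp
    have hmul := hd1.mul hd2
    have hft : f t = deriv γ t / γ t := if_neg (hne t ht)
    have hγne := hne t ht
    have heq0 : deriv γ t * Complex.exp (-H t) + γ t * (Complex.exp (-H t) * -f t) = 0 := by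
      rw [hft]
      have h9 : γ t * (Complex.exp (-H t) * -(deriv γ t / γ t))
          = -(deriv γ t * Complex.exp (-H t)) := by
        field_simp
      rw [h9]
      ring
    rw [← heq0]
    exact hmul
  have hηc : ContinuousOn (fun s => γ s * Complex.exp (-H s)) (Icc 0 1) :=
    hγc.continuousOn.mul (Complex.continuous_exp.comp_continuousOn hHc.neg)
  have hconst := constant_of_has_deriv_right_zero hηc
    (fun x hx => (hηd x (Ico_subset_Icc_self hx)).hasDerivWithinAt)
  have hγt : ∀ t ∈ Icc (0:ℝ) 1, γ t = γ 0 * Complex.exp (H t) := by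
    intro t ht
    have h := hconst t ht
    rw [hH0] at h
    simp only [neg_zero, Complex.exp_zero, mul_one] at h
    calc γ t = γ t * Complex.exp (-H t) * Complex.exp (H t) := by
          rw [mul_assoc, ← Complex.exp_add]; simp
      _ = γ 0 * Complex.exp (H t) := by rw [h]
  have hexp1 : Complex.exp (H 1) = z₂ / z₁ := by
    have h := hγt 1 (right_mem_Icc.2 zero_le_one)
    rw [hγ0, hγ1] at h
    rw [eq_div_iff hz₁, mul_comm]
    exact h.symm
  -- the winding argument
  obtain ⟨k, hk⟩ : ∃ k : ℤ, H 1 - Complex.log (z₂/z₁) = k * (2*(π:ℂ)*Complex.I) := by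
    rw [← Complex.exp_eq_one_iff, Complex.exp_sub, hexp1,
      Complex.exp_log (div_ne_zero hz₂ hz₁), div_self (div_ne_zero hz₂ hz₁)]
  have hIm : (H 1).im = Complex.arg (z₂/z₁) + (k:ℝ) * (2*π) := by
    have h := congrArg Complex.im hk
    simp only [Complex.sub_im, Complex.log_im] at h
    have : ((k:ℂ) * (2*(π:ℂ)*Complex.I)).im = (k:ℝ) * (2*π) := by
      simp [Complex.mul_im]
      try ring
    rw [this] at h
    linarith
  have hnpos : (0:ℝ) < (n:ℝ) + 1 := by positivity
  have hImabs : Real.pi / ((n:ℝ)+1) ≤ |(H 1).im| := by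
    have hle : |Complex.arg (z₂/z₁)| ≤ π := Complex.abs_arg_le_pi _
    have hπ := Real.pi_pos
    have hdivle : Real.pi / ((n:ℝ)+1) ≤ π := by
      apply div_le_self hπ.le
      linarith [Nat.cast_nonneg (α := ℝ) n]
    rcases eq_or_ne k 0 with hk0 | hk0
    · rw [hIm, hk0]
      simpa using harg
    · have h2 : (1:ℝ) ≤ |(k:ℝ)| := by exact_mod_cast Int.one_le_abs hk0
      have hb : 2*π ≤ |(k:ℝ)*(2*π)| := by
        rw [abs_mul, abs_of_pos (by linarith : (0:ℝ) < 2*π)]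
        nlinarith
      have h4 : |(k:ℝ)*(2*π)| ≤ |Complex.arg (z₂/z₁) + (k:ℝ)*(2*π)| + |Complex.arg (z₂/z₁)| := by
        calc |(k:ℝ)*(2*π)|
            = |(Complex.arg (z₂/z₁) + (k:ℝ)*(2*π)) + (-Complex.arg (z₂/z₁))| := by congr 1; ring
          _ ≤ |Complex.arg (z₂/z₁) + (k:ℝ)*(2*π)| + |-Complex.arg (z₂/z₁)| := abs_add_le _ _
          _ = |Complex.arg (z₂/z₁) + (k:ℝ)*(2*π)| + |Complex.arg (z₂/z₁)| := by rw [abs_neg]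
      rw [hIm]
      linarith
  set c := z₁ ^ (n+1) with hc
  set v := fun t => ((n+1 : ℕ) : ℂ) * H t with hv
  have hvc : ContinuousOn v (Icc 0 1) := continuousOn_const.mul hHc
  set g := fun t => c * Complex.exp (v t) * (((n+1:ℕ):ℂ) * f t) with hg
  have hgc : ContinuousOn g (Icc 0 1) :=
    (continuousOn_const.mul (Complex.continuous_exp.comp_continuousOn hvc)).mul
      (continuousOn_const.mul hfcOn)
  have hwd : ∀ t ∈ Icc (0:ℝ) 1, HasDerivAt (fun s => c * Complex.exp (v s)) (g t) t := by
    intro t ht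
    have hvd : HasDerivAt v (((n+1:ℕ):ℂ) * f t) t := (hHd t ht).const_mul _
    have h5 := (hvd.cexp).const_mul c
    refine h5.congr_deriv ?_
    simp only [hg]
    ring
  have hct : ∀ t ∈ Icc (0:ℝ) 1, c * Complex.exp (v t) = γ t ^ (n+1) := by
    intro t ht
    rw [hγt t ht, hγ0, mul_pow, hc, hv]
    congr 1
    rw [← Complex.exp_nat_mul]
  have hgnorm : ∀ t ∈ Icc (0:ℝ) 1, ‖g t‖ = ((n:ℝ)+1) * (‖γ t‖ ^ n * ‖deriv γ t‖) := by
    intro t ht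
    show ‖c * Complex.exp (v t) * (((n+1:ℕ):ℂ) * f t)‖ = _
    rw [hct t ht, norm_mul, norm_mul]
    have hfn : ‖f t‖ = ‖deriv γ t‖ / ‖γ t‖ := by
      rw [hf]
      simp only [if_neg (hne t ht)]
      rw [norm_div]
    rw [hfn, norm_pow]
    have hnn : ‖((n+1:ℕ):ℂ)‖ = ((n:ℝ)+1) := by
      rw [Complex.norm_natCast]
      push_cast
      ring
    rw [hnn]
    have hap : ‖γ t‖ ≠ 0 := by
      simpa using hne t ht
    rw [pow_succ]
    field_simp
  have hIeq : (∫ t in (0:ℝ)..1, ‖g t‖)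
      = ((n:ℝ)+1) * ∫ t in (0:ℝ)..1, ‖γ t‖ ^ n * ‖deriv γ t‖ := by
    rw [← intervalIntegral.integral_const_mul]
    apply intervalIntegral.integral_congr
    intro t ht
    rw [uIcc_of_le zero_le_one] at ht
    exact hgnorm t ht
  have hv0 : v 0 = 0 := by rw [hv]; simp [hH0]
  have habsc : ‖c‖ = ‖z₁‖ ^ (n+1) := by rw [hc]; simp [map_pow]
  have hre1 : (v 1).re = ((n:ℝ)+1) * (H 1).re := by
    rw [hv]
    simp [Complex.mul_re]
  have him1 : (v 1).im = ((n:ℝ)+1) * (H 1).im := by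
    rw [hv]
    simp [Complex.mul_im]
  have habs2 : ‖c‖ * Real.exp ((v 1).re) = ‖z₂‖ ^ (n+1) := by
    have hz2 : ‖z₂‖ = ‖z₁‖ * Real.exp ((H 1).re) := by
      rw [← hγ1, hγt 1 (right_mem_Icc.2 zero_le_one), hγ0, norm_mul, Complex.norm_exp]
    rw [hz2, mul_pow, habsc, hre1]
    congr 1
    rw [show ((n:ℝ)+1) * (H 1).re = ((n+1:ℕ):ℝ) * (H 1).re by push_cast; ring,
      Real.exp_nat_mul]
  have hkey : Real.pi ≤ ((n:ℝ)+1) * |(H 1).im| := by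
    have := (div_le_iff₀ hnpos).1 hImabs
    linarith
  have hmain : ‖z₁‖ ^ (n+1) + ‖z₂‖ ^ (n+1) ≤ ∫ t in (0:ℝ)..1, ‖g t‖ := by
    rcases le_or_gt 0 ((H 1).im) with hpos | hneg
    · have hΔ : Real.pi ≤ (v 1).im - (v 0).im := by
        rw [hv0, Complex.zero_im, sub_zero, him1]
        rw [abs_of_nonneg hpos] at hkey
        exact hkey
      have h6 := euclid c v g hwd hvc hgc hΔ
      rw [hv0, Complex.zero_re, Real.exp_zero, habs2, mul_one, habsc] at h6
      exact h6
    · set c' := (starRingEnd ℂ) c with hc'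
      set v' := fun t => (starRingEnd ℂ) (v t) with hv'
      set g' := fun t => (starRingEnd ℂ) (g t) with hg'
      have hwd' : ∀ t ∈ Icc (0:ℝ) 1, HasDerivAt (fun s => c' * Complex.exp (v' s)) (g' t) t := by
        intro t ht
        have hcomp := Complex.conjCLE.toContinuousLinearMap.hasFDerivAt.comp_hasDerivAt t
          (hwd t ht)
        have hfun : (⇑Complex.conjCLE.toContinuousLinearMap ∘ fun s => c * Complex.exp (v s))
            = fun s => c' * Complex.exp (v' s) := by
          funext s
          simp only [Function.comp_apply, ContinuousLinearEquiv.coe_coe, Complex.conjCLE_apply]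
          rw [map_mul, ← Complex.exp_conj]
        rw [hfun] at hcomp
        exact hcomp
      have hvc' : ContinuousOn v' (Icc 0 1) :=
        Complex.conjCLE.continuous.comp_continuousOn hvc
      have hgc' : ContinuousOn g' (Icc 0 1) :=
        Complex.conjCLE.continuous.comp_continuousOn hgc
      have hΔ' : Real.pi ≤ (v' 1).im - (v' 0).im := by
        simp only [hv', Complex.conj_im]
        rw [hv0, Complex.zero_im, neg_zero, sub_zero, him1]
        rw [abs_of_neg hneg] at hkey
        linarith
      have h6 := euclid c' v' g' hwd' hvc' hgc' hΔ'
      have hgg : (∫ t in (0:ℝ)..1, ‖g' t‖) = ∫ t in (0:ℝ)..1, ‖g t‖ := by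
        apply intervalIntegral.integral_congr
        intro t _
        simp only [hg', Complex.norm_conj]
      rw [hgg] at h6
      simp only [hc', hv', Complex.conj_re, Complex.norm_conj] at h6
      rw [hv0, Complex.zero_re, Real.exp_zero, habs2, mul_one, habsc] at h6
      exact h6
  rw [hIeq] at hmain
  rw [div_le_iff₀ hnpos]
  linarith [hmain]

end StrebelAux

open StrebelAux in
/-- For `n ≥ 1` and nonzero `z₁, z₂` with `|Arg(z₂/z₁)| ≥ π/(n+1)`,
the `φ`-distance between `z₁` and `z₂` equals `(|z₁|^{n+1} + |z₂|^{n+1})/(n+1)`,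
and it is realized by the broken path consisting of the two radii from `z₁` to `0`
and from `0` to `z₂`. -/
theorem phi_distance_two_radii (n : ℕ) (hn : 1 ≤ n) (z₁ z₂ : ℂ)
    (hz₁ : z₁ ≠ 0) (hz₂ : z₂ ≠ 0)
    (harg : Real.pi / (n + 1) ≤ |Complex.arg (z₂ / z₁)|) :
    sInf {L : ℝ | ∃ γ : ℝ → ℂ, ContDiff ℝ 1 γ ∧ γ 0 = z₁ ∧ γ 1 = z₂ ∧
        L = ∫ t in (0:ℝ)..1, ‖γ t‖ ^ n * ‖deriv γ t‖} =
      (‖z₁‖ ^ (n + 1) + ‖z₂‖ ^ (n + 1)) / (n + 1) ∧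
    (∫ t in (0:ℝ)..1,
        ‖((1 - t : ℝ) : ℂ) * z₁‖ ^ n *
          ‖deriv (fun s : ℝ => ((1 - s : ℝ) : ℂ) * z₁) t‖) +
      (∫ t in (0:ℝ)..1,
        ‖(t : ℂ) * z₂‖ ^ n * ‖deriv (fun s : ℝ => (s : ℂ) * z₂) t‖) =
      (‖z₁‖ ^ (n + 1) + ‖z₂‖ ^ (n + 1)) / (n + 1) := by
  have hnpos : (0:ℝ) < (n:ℝ) + 1 := by positivity
  constructor
  · apply le_antisymm
    · apply csInf_le
      · refine ⟨0, ?_⟩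
        rintro L ⟨γ, hγ, h0, h1, rfl⟩
        apply intervalIntegral.integral_nonneg zero_le_one
        intro u hu
        positivity
      · exact ⟨gpath z₁ z₂, gpath_contDiff z₁ z₂, gpath_zero z₁ z₂, gpath_one z₁ z₂,
          (gpath_integral n z₁ z₂).symm⟩
    · apply le_csInf
      · exact ⟨_, gpath z₁ z₂, gpath_contDiff z₁ z₂, gpath_zero z₁ z₂, gpath_one z₁ z₂,
          (gpath_integral n z₁ z₂).symm⟩
      · rintro L ⟨γ, hγ, h0, h1, rfl⟩
        by_cases hz : ∃ t ∈ Icc (0:ℝ) 1, γ t = 0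
        · obtain ⟨t₀, ht₀, hγt₀⟩ := hz
          have b1 : ‖z₁‖ ^ (n+1) / ((n:ℝ)+1)
              ≤ ∫ t in (0:ℝ)..t₀, ‖γ t‖ ^ n * ‖deriv γ t‖ := by
            have hb := caseA_bound n hn γ hγ 0 t₀ ht₀.1
            rw [hγt₀, h0, norm_zero, zero_pow (Nat.succ_ne_zero n), zero_sub, abs_neg,
              abs_of_nonneg (by positivity)] at hb
            exact hb
          have b2 : ‖z₂‖ ^ (n+1) / ((n:ℝ)+1)
              ≤ ∫ t in t₀..1, ‖γ t‖ ^ n * ‖deriv γ t‖ := by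
            have hb := caseA_bound n hn γ hγ t₀ 1 ht₀.2
            rw [hγt₀, h1, norm_zero, zero_pow (Nat.succ_ne_zero n), sub_zero,
              abs_of_nonneg (by positivity)] at hb
            exact hb
          have hIc : Continuous (fun t => ‖γ t‖ ^ n * ‖deriv γ t‖) :=
            ((continuous_norm.comp hγ.continuous).pow n).mul
              ((hγ.continuous_deriv le_rfl).norm)
          have hsplit : (∫ t in (0:ℝ)..t₀, ‖γ t‖ ^ n * ‖deriv γ t‖)
              + (∫ t in t₀..1, ‖γ t‖ ^ n * ‖deriv γ t‖)
              = ∫ t in (0:ℝ)..1, ‖γ t‖ ^ n * ‖deriv γ t‖ :=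
            integral_add_adjacent_intervals (hIc.intervalIntegrable _ _)
              (hIc.intervalIntegrable _ _)
          rw [add_div]
          exact le_trans (add_le_add b1 b2) (le_of_eq hsplit)
        · push_neg at hz
          exact caseB n z₁ z₂ hz₁ hz₂ harg γ hγ h0 h1 hz
  · rw [radial1, radial2, add_div]
end

section
/- Let C be a nonzero real number, let 0 < u₁ ≤ u₂, and set z₁ = u₁ + iC/u₁ and z₂ = u₂ + iC/u₂. Then: (1) every C¹ path γ : [0,1] → ℂ with γ(0) = z₁ and γ(1) = z₂ satisfies ∫₀¹ |γ(t)| ‖γ'(t)‖ dt ≥ |z₁² − z₂²|/2; and (2) the hyperbola arc γ(t) = t + iC/t for t ∈ [u₁, u₂] joins z₁ to z₂ and has length ∫_{u₁}^{u₂} |γ(t)| ‖γ'(t)‖ dt exactly equal to |z₁² − z₂²|/2. Consequently the arc of the hyperbola v = C/u between z₁ and z₂ is a shortest path in the conformal metric with density |z|. -/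
lemma hyp_hasDeriv (C t : ℝ) (ht : t ≠ 0) :
    HasDerivAt (fun s : ℝ => (s : ℂ) + Complex.I * ((C / s : ℝ) : ℂ))
      (1 + Complex.I * ((-(C / t ^ 2) : ℝ) : ℂ)) t := by
  have h1 : HasDerivAt (fun s : ℝ => (s : ℂ)) 1 t := (hasDerivAt_id t).ofReal_comp
  have h2 : HasDerivAt (fun s : ℝ => C / s) (-(C / t ^ 2)) t := by
    have := (hasDerivAt_inv ht).const_mul C
    simpa [div_eq_mul_inv, neg_div, mul_comm] using this
  have h3 := (h2.ofReal_comp).const_mul Complex.I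
  exact h1.add h3

lemma hyp_prod (C t : ℝ) (ht : t ≠ 0) :
    ((t : ℂ) + Complex.I * ((C / t : ℝ) : ℂ)) * (1 + Complex.I * ((-(C / t ^ 2) : ℝ) : ℂ))
      = ((t + C ^ 2 / t ^ 3 : ℝ) : ℂ) := by
  have htc : (t : ℂ) ≠ 0 := by exact_mod_cast ht
  push_cast
  field_simp
  ring_nf
  simp [Complex.I_sq]

lemma F_hasDeriv (C t : ℝ) (ht : t ≠ 0) :
    HasDerivAt (fun s : ℝ => s ^ 2 / 2 - C ^ 2 / 2 * (s ^ 2)⁻¹) (t + C ^ 2 / t ^ 3) t := by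
  have h1 : HasDerivAt (fun s : ℝ => s ^ 2 / 2) ((2 * t ^ 1) / 2) t :=
    (hasDerivAt_pow 2 t).div_const 2
  have h2 : HasDerivAt (fun s : ℝ => C ^ 2 / 2 * (s ^ 2)⁻¹)
      (C ^ 2 / 2 * (-(2 * t ^ 1) / (t ^ 2) ^ 2)) t :=
    ((hasDerivAt_pow 2 t).inv (pow_ne_zero 2 ht)).const_mul (C ^ 2 / 2)
  refine (h1.sub h2).congr_deriv ?_
  field_simp
  ring

lemma lower_bound_aux (z₁ z₂ : ℂ) :
    (∀ γ : ℝ → ℂ, ContDiff ℝ 1 γ → γ 0 = z₁ → γ 1 = z₂ →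
        (∫ t in (0:ℝ)..1, ‖γ t‖ * ‖deriv γ t‖) ≥
          ‖z₁ ^ 2 - z₂ ^ 2‖ / 2) := by
  intro γ hγ h0 h1
  have hγd : Differentiable ℝ γ := hγ.differentiable one_ne_zero
  have hder : ∀ t : ℝ, HasDerivAt (fun s => γ s ^ 2) (2 * γ t * deriv γ t) t := by
    intro t
    have h : HasDerivAt (fun y => γ y * γ y) (deriv γ t * γ t + γ t * deriv γ t) t :=
      (hγd t).hasDerivAt.mul (hγd t).hasDerivAt
    have e : (fun y => γ y * γ y) = fun y => γ y ^ 2 := by ext y; ring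
    rw [e] at h
    convert h using 1; ring
  have hcont : Continuous fun t => (2 : ℂ) * γ t * deriv γ t :=
    (continuous_const.mul hγ.continuous).mul (hγ.continuous_deriv le_rfl)
  have hint := intervalIntegral.integral_eq_sub_of_hasDerivAt (a := (0:ℝ)) (b := 1)
    (fun t _ => hder t) (hcont.intervalIntegrable 0 1)
  have key : ‖z₁ ^ 2 - z₂ ^ 2‖ ≤
      ∫ t in (0:ℝ)..1, ‖(2 : ℂ) * γ t * deriv γ t‖ := by
    calc ‖z₁ ^ 2 - z₂ ^ 2‖ = ‖γ 1 ^ 2 - γ 0 ^ 2‖ := by rw [h0, h1, norm_sub_rev]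
      _ = ‖∫ t in (0:ℝ)..1, (2:ℂ) * γ t * deriv γ t‖ := by rw [hint]
      _ ≤ ∫ t in (0:ℝ)..1, ‖(2:ℂ) * γ t * deriv γ t‖ :=
          intervalIntegral.norm_integral_le_integral_norm zero_le_one
  have heq : (∫ t in (0:ℝ)..1, ‖(2:ℂ) * γ t * deriv γ t‖)
      = 2 * ∫ t in (0:ℝ)..1, ‖γ t‖ * ‖deriv γ t‖ := by
    rw [← intervalIntegral.integral_const_mul]
    apply intervalIntegral.integral_congr
    intro t _
    simp [mul_assoc]
  rw [heq] at key
  linarith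

/-- For a nonzero real `C`, `0 < u₁ ≤ u₂`, `z₁ = u₁ + iC/u₁`,
`z₂ = u₂ + iC/u₂`: (1) every `C¹` path `γ` from `z₁` to `z₂` has `φ`-length (density `|z|`)
at least `|z₁² − z₂²|/2`; (2) the hyperbola arc `t ↦ t + iC/t`, `t ∈ [u₁, u₂]`, joins
`z₁` to `z₂` and has `φ`-length exactly `|z₁² − z₂²|/2`. Hence the hyperbola arc is a
shortest path for the conformal metric with density `|z|`. -/
theorem hyperbola_arc_is_shortest (C : ℝ) (hC : C ≠ 0) (u₁ u₂ : ℝ)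
    (hu₁ : 0 < u₁) (hu : u₁ ≤ u₂) (z₁ z₂ : ℂ)
    (hz₁ : z₁ = (u₁ : ℂ) + Complex.I * ((C / u₁ : ℝ) : ℂ))
    (hz₂ : z₂ = (u₂ : ℂ) + Complex.I * ((C / u₂ : ℝ) : ℂ)) :
    (∀ γ : ℝ → ℂ, ContDiff ℝ 1 γ → γ 0 = z₁ → γ 1 = z₂ →
        (∫ t in (0:ℝ)..1, ‖γ t‖ * ‖deriv γ t‖) ≥
          ‖z₁ ^ 2 - z₂ ^ 2‖ / 2) ∧
    ((fun t : ℝ => (t : ℂ) + Complex.I * ((C / t : ℝ) : ℂ)) u₁ = z₁ ∧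
      (fun t : ℝ => (t : ℂ) + Complex.I * ((C / t : ℝ) : ℂ)) u₂ = z₂ ∧
      (∫ t in u₁..u₂,
          ‖(t : ℂ) + Complex.I * ((C / t : ℝ) : ℂ)‖ *
            ‖deriv (fun s : ℝ => (s : ℂ) + Complex.I * ((C / s : ℝ) : ℂ)) t‖) =
        ‖z₁ ^ 2 - z₂ ^ 2‖ / 2) := by
  refine ⟨lower_bound_aux z₁ z₂, hz₁.symm, hz₂.symm, ?_⟩
  have hu₂ : 0 < u₂ := lt_of_lt_of_le hu₁ hu
  have huIcc : Set.uIcc u₁ u₂ = Set.Icc u₁ u₂ := Set.uIcc_of_le hu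
  have hpos : ∀ t ∈ Set.uIcc u₁ u₂, 0 < t := by
    intro t ht
    rw [huIcc] at ht
    exact lt_of_lt_of_le hu₁ ht.1
  have hcongr : (∫ t in u₁..u₂,
      ‖(t : ℂ) + Complex.I * ((C / t : ℝ) : ℂ)‖ *
        ‖deriv (fun s : ℝ => (s : ℂ) + Complex.I * ((C / s : ℝ) : ℂ)) t‖)
      = ∫ t in u₁..u₂, (t + C ^ 2 / t ^ 3) := by
    apply intervalIntegral.integral_congr
    intro t ht
    have ht0 : t ≠ 0 := ne_of_gt (hpos t ht)
    have hd := (hyp_hasDeriv C t ht0).deriv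
    simp only []
    rw [hd, ← norm_mul, hyp_prod C t ht0, Complex.norm_real,
      Real.norm_of_nonneg]
    exact add_nonneg (hpos t ht).le (div_nonneg (sq_nonneg C) (pow_nonneg (hpos t ht).le 3))
  rw [hcongr]
  have hFTC := intervalIntegral.integral_eq_sub_of_hasDerivAt
    (f := fun s : ℝ => s ^ 2 / 2 - C ^ 2 / 2 * (s ^ 2)⁻¹)
    (f' := fun t => t + C ^ 2 / t ^ 3) (a := u₁) (b := u₂)
    (fun t ht => F_hasDeriv C t (ne_of_gt (hpos t ht)))
    (by
      apply ContinuousOn.intervalIntegrable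
      apply ContinuousOn.add continuousOn_id
      exact continuousOn_const.div ((continuous_pow 3).continuousOn)
        (fun t ht => pow_ne_zero 3 (ne_of_gt (hpos t ht))))
  rw [hFTC]
  have hzz : z₁ ^ 2 - z₂ ^ 2 =
      (((u₁ ^ 2 - C ^ 2 / u₁ ^ 2) - (u₂ ^ 2 - C ^ 2 / u₂ ^ 2) : ℝ) : ℂ) := by
    subst hz₁ hz₂
    have h1 : (u₁ : ℂ) ≠ 0 := by exact_mod_cast ne_of_gt hu₁
    have h2 : (u₂ : ℂ) ≠ 0 := by exact_mod_cast ne_of_gt hu₂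
    push_cast
    field_simp
    ring_nf
    simp [Complex.I_sq]
    ring
  rw [hzz, Complex.norm_real, Real.norm_of_nonpos]
  · have h1 : u₁ ^ 2 ≠ 0 := by positivity
    have h2 : u₂ ^ 2 ≠ 0 := by positivity
    field_simp
    ring
  · have hle1 : u₁ ^ 2 ≤ u₂ ^ 2 := by nlinarith
    have hle2 : C ^ 2 / u₂ ^ 2 ≤ C ^ 2 / u₁ ^ 2 := by
      apply div_le_div_of_nonneg_left (by positivity) (by positivity) hle1
    linarith
end
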